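/- Let l ≥ 1, s_1 ≥ 2, s_2,…,s_l ≥ 1 be integers and let Q_1 ∈ tℝ[t], Q_2,…,Q_l ∈ ℝ[t] be polynomials. For real q with 0 < q < 1 the series F(q) = Σ_{n_1>⋯>n_l>0} Q_1(q^{n_1})⋯Q_l(q^{n_l}) / ((1−q^{n_1})^{s_1}⋯(1−q^{n_l})^{s_l}) converges, and as q → 1 from below one has (1−q)^{s_1+⋯+s_l} · F(q) → Q_1(1)⋯Q_l(1) · ζ(s_1,…,s_l), where ζ(s_1,…,s_l) = Σ_{n_1>⋯>n_l>0} 1/(n_1^{s_1}⋯n_l^{s_l}) is the multiple zeta value. -/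

import Mathlib

open Filter

lemma aux_summable_pi_prod (l : ℕ) (f : ℕ → ℝ) (hf0 : ∀ m, 0 ≤ f m) (hf : Summable f) :
    Summable (fun n : Fin l → ℕ => ∏ j, f (n j)) := by
  induction l with
  | zero =>
    simp only [Finset.univ_eq_empty, Finset.prod_empty]
    exact summable_of_finite_support (Set.toFinite _)
  | succ l ih =>
    have h := hf.mul_of_nonneg ih (fun _ => hf0 _)
      (fun n => Finset.prod_nonneg fun j _ => hf0 _)
    have h2 := h.comp_injective (Fin.consEquiv (fun _ : Fin (l+1) => ℕ)).symm.injective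
    refine h2.congr fun n => ?_
    simp [Fin.consEquiv, Fin.prod_univ_succ, Fin.tail]

lemma aux_mzv_key (l : ℕ) (hl : 0 < l) (s : Fin l → ℕ)
    (hs₁ : 2 ≤ s ⟨0, hl⟩) (hs : ∀ j, 1 ≤ s j) (n : Fin l → ℕ)
    (hsa : StrictAnti n) (hpos : ∀ i, 0 < n i) :
    ∏ j, ((n j : ℝ) ^ s j)⁻¹ ≤ ∏ j, (n j : ℝ) ^ (-(1 + 1/(l:ℝ))) := by
  set j0 : Fin l := ⟨0, hl⟩
  have h1 : ∀ j, (1:ℝ) ≤ (n j : ℝ) := fun j => by exact_mod_cast hpos j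
  have hN : ∀ j, (n j : ℝ) ≤ (n j0 : ℝ) := by
    intro j
    exact_mod_cast Nat.cast_le.mpr (hsa.antitone (Fin.mk_le_of_le_val (Nat.zero_le _)))
  have hNpos : (0:ℝ) < (n j0 : ℝ) := by exact_mod_cast hpos j0
  -- key : ∏ (n j)^(1+1/l) ≤ (∏ n j) * n j0 ≤ ∏ (n j)^(s j)
  have key1 : ∏ j, (n j : ℝ) ^ ((1 + 1/(l:ℝ))) ≤ (∏ j, (n j : ℝ)) * (n j0 : ℝ) := by
    have : ∀ j, (n j : ℝ) ^ ((1 + 1/(l:ℝ))) = (n j : ℝ) * (n j : ℝ) ^ (1/(l:ℝ)) := by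
      intro j
      rw [Real.rpow_add (by linarith [h1 j]), Real.rpow_one]
    simp only [this]
    rw [Finset.prod_mul_distrib]
    refine mul_le_mul_of_nonneg_left ?_ (Finset.prod_nonneg fun j _ => by positivity)
    calc ∏ j, (n j : ℝ) ^ (1/(l:ℝ)) ≤ ∏ j : Fin l, (n j0 : ℝ) ^ (1/(l:ℝ)) := by
          refine Finset.prod_le_prod (fun j _ => by positivity) (fun j _ => ?_)
          exact Real.rpow_le_rpow (by positivity) (hN j) (by positivity)
      _ = (n j0 : ℝ) := by
          rw [Finset.prod_const, ← Real.rpow_natCast ((n j0 : ℝ) ^ (1/(l:ℝ))),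
            ← Real.rpow_mul hNpos.le, Finset.card_univ, Fintype.card_fin,
            one_div, inv_mul_cancel₀ (by exact_mod_cast hl.ne'), Real.rpow_one]
  have key2 : (∏ j, (n j : ℝ)) * (n j0 : ℝ) ≤ ∏ j, (n j : ℝ) ^ s j := by
    have : ∀ j ∈ Finset.univ, (n j : ℝ) * (if j = j0 then (n j0:ℝ) else 1) ≤ (n j : ℝ) ^ s j := by
      intro j _
      by_cases h : j = j0
      · rw [if_pos h, ← h]
        calc (n j : ℝ) * (n j : ℝ) = (n j : ℝ) ^ 2 := (sq _).symm
          _ ≤ (n j : ℝ) ^ s j := pow_le_pow_right₀ (h1 j) (h ▸ hs₁)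
      · simp only [if_neg h, mul_one]
        calc (n j : ℝ) = (n j : ℝ) ^ 1 := (pow_one _).symm
          _ ≤ (n j : ℝ) ^ s j := pow_le_pow_right₀ (h1 j) (hs j)
    calc (∏ j, (n j : ℝ)) * (n j0 : ℝ)
        = ∏ j, ((n j : ℝ) * (if j = j0 then (n j0:ℝ) else 1)) := by
          rw [Finset.prod_mul_distrib, Finset.prod_ite_eq' Finset.univ j0 (fun _ => (n j0 : ℝ))]
          simp
      _ ≤ ∏ j, (n j : ℝ) ^ s j := Finset.prod_le_prod
          (fun j _ => mul_nonneg (by positivity) (by positivity)) this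
  have hchain := key1.trans key2
  calc ∏ j, ((n j : ℝ) ^ s j)⁻¹ = (∏ j, (n j : ℝ) ^ s j)⁻¹ := by
        rw [← Finset.prod_inv_distrib]
    _ ≤ (∏ j, (n j : ℝ) ^ ((1 + 1/(l:ℝ))))⁻¹ := by
        exact inv_anti₀ (Finset.prod_pos fun j _ => Real.rpow_pos_of_pos (lt_of_lt_of_le zero_lt_one (h1 j)) _) hchain
    _ = ∏ j, (n j : ℝ) ^ (-(1 + 1/(l:ℝ))) := by
        rw [← Finset.prod_inv_distrib]
        exact Finset.prod_congr rfl fun j _ => (Real.rpow_neg (by positivity) _).symm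

set_option maxHeartbeats 1000000 in
lemma aux_mzv_summable (l : ℕ) (hl : 0 < l) (s : Fin l → ℕ)
    (hs₁ : 2 ≤ s ⟨0, hl⟩) (hs : ∀ j, 1 ≤ s j) :
    Summable (fun n : {n : Fin l → ℕ // StrictAnti n ∧ ∀ i, 0 < n i} =>
      ∏ j, ((n.1 j : ℝ) ^ s j)⁻¹) := by
  have hp : (-(1 + 1/(l:ℝ))) < -1 := by
    have : (0:ℝ) < 1/(l:ℝ) := by positivity
    linarith
  have hsum : Summable (fun n : Fin l → ℕ => ∏ j, (n j : ℝ) ^ (-(1 + 1/(l:ℝ)))) :=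
    aux_summable_pi_prod l (fun m : ℕ => (m : ℝ) ^ (-(1 + 1/(l:ℝ)))) (fun m => Real.rpow_nonneg (Nat.cast_nonneg m) _)
      (Real.summable_nat_rpow.mpr hp)
  refine Summable.of_nonneg_of_le (fun n => Finset.prod_nonneg fun j _ => by positivity)
    (fun n => aux_mzv_key l hl s hs₁ hs n.1 n.2.1 n.2.2) (hsum.subtype _)

-- ratio bound
lemma aux_ratio_bound {q : ℝ} (hq0 : 0 < q) (hq1 : q < 1) (m : ℕ) (hm : 1 ≤ m) :
    0 < 1 - q ^ m ∧ (1 - q) / (1 - q ^ m) ≤ (1 + m * (-Real.log q)) / m := by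
  set u : ℝ := -Real.log q with hu
  have hupos : 0 < u := by
    simp only [hu, neg_pos]
    exact Real.log_neg hq0 hq1
  have hqm : q ^ m = Real.exp (-(m * u)) := by
    have h : -(m * u) = m * Real.log q := by rw [hu]; ring
    rw [h, Real.exp_nat_mul, Real.exp_log hq0]
  have hmu : (0:ℝ) < m * u := by positivity
  have hlb : (m * u) / (1 + m * u) ≤ 1 - q ^ m := by
    rw [hqm]
    have h1 := Real.add_one_le_exp (m * u)
    have h2 : Real.exp (-(m * u)) ≤ (1 + m * u)⁻¹ := by
      rw [Real.exp_neg]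
      exact inv_anti₀ (by linarith) (by linarith)
    have h3 : (1:ℝ) - (1 + m*u)⁻¹ = (m*u)/(1+m*u) := by
      field_simp
      ring
    linarith [h3 ▸ sub_le_sub_left h2 1]
  have hpos : 0 < 1 - q ^ m := lt_of_lt_of_le (by positivity) hlb
  refine ⟨hpos, ?_⟩
  have h1q : 1 - q ≤ u := by
    have := Real.log_le_sub_one_of_pos hq0
    simp only [hu]; linarith
  calc (1 - q) / (1 - q ^ m) ≤ u / ((m * u) / (1 + m * u)) := by
        apply div_le_div₀ (le_of_lt hupos) h1q (by positivity) hlb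
    _ = (1 + m * u) / m := by
        field_simp

lemma aux_exp_bound (S : ℕ) (hS : 0 < S) (x : ℝ) (hx : 0 ≤ x) :
    (1 + x) ^ S ≤ (S:ℝ) ^ S * Real.exp 1 * Real.exp x := by
  have h1 : (1 + x) ≤ (S:ℝ) * Real.exp ((1 + x) / S) := by
    have ht : (1 + x) / S ≤ Real.exp ((1 + x) / S) :=
      le_trans (by linarith [Real.add_one_le_exp ((1+x)/(S:ℝ))]) (le_refl _) |>.trans (le_refl _)
    calc (1 + x) = (S:ℝ) * ((1 + x) / S) := by
          field_simp
      _ ≤ (S:ℝ) * Real.exp ((1 + x) / S) := by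
          apply mul_le_mul_of_nonneg_left _ (by positivity)
          linarith [Real.add_one_le_exp ((1+x)/(S:ℝ))]
    
  calc (1 + x) ^ S ≤ ((S:ℝ) * Real.exp ((1 + x) / S)) ^ S :=
        pow_le_pow_left₀ (by linarith) h1 S
    _ = (S:ℝ) ^ S * Real.exp 1 * Real.exp x := by
        rw [mul_pow, ← Real.exp_nat_mul, mul_div_cancel₀ _ (by exact_mod_cast hS.ne' : (S:ℝ) ≠ 0),
          Real.exp_add, mul_assoc]

lemma aux_poly_bound (P : Polynomial ℝ) :
    ∃ B : ℝ, 0 ≤ B ∧ ∀ x ∈ Set.Icc (0:ℝ) 1, |P.eval x| ≤ B := by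
  obtain ⟨C, hC⟩ := isCompact_Icc.exists_bound_of_continuousOn
    (P.continuous.continuousOn (s := Set.Icc (0:ℝ) 1))
  refine ⟨max C 0, le_max_right _ _, fun x hx => ?_⟩
  exact le_trans (by simpa using hC x hx) (le_max_left _ _)

lemma aux_ratio_eq {q : ℝ} (hq1 : q ≠ 1) (m : ℕ) :
    (1 - q) / (1 - q ^ m) = (∑ i ∈ Finset.range m, q ^ i)⁻¹ := by
  have h : (1 - q ^ m) = (∑ i ∈ Finset.range m, q ^ i) * (1 - q) := by
    have := geom_sum_mul q m
    linarith [this]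
  rw [h, div_mul_eq_div_div_swap, div_self (sub_ne_zero.mpr (Ne.symm hq1)), one_div]

lemma aux_tendsto_term (m : ℕ) (P : Polynomial ℝ) (k : ℕ) (hm : 0 < m) :
    Tendsto (fun q : ℝ => P.eval (q ^ m) * ((1 - q) / (1 - q ^ m)) ^ k)
      (nhdsWithin 1 (Set.Ioo (0:ℝ) 1))
      (nhds (P.eval 1 * ((m:ℝ)⁻¹) ^ k)) := by
  have heq : ∀ q ∈ Set.Ioo (0:ℝ) 1,
      P.eval (q ^ m) * ((1 - q) / (1 - q ^ m)) ^ k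
        = P.eval (q ^ m) * ((∑ i ∈ Finset.range m, q ^ i)⁻¹) ^ k := by
    intro q hq
    rw [aux_ratio_eq (ne_of_lt hq.2) m]
  have hcont : Tendsto (fun q : ℝ => P.eval (q ^ m) * ((∑ i ∈ Finset.range m, q ^ i)⁻¹) ^ k)
      (nhds 1) (nhds (P.eval 1 * ((m:ℝ)⁻¹) ^ k)) := by
    have h1 : Tendsto (fun q : ℝ => P.eval (q ^ m)) (nhds 1) (nhds (P.eval 1)) := by
      have := (P.continuous.comp (continuous_pow m)).tendsto 1
      simpa [Function.comp_def] using this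
    have h2 : Tendsto (fun q : ℝ => (∑ i ∈ Finset.range m, q ^ i)) (nhds 1) (nhds m) := by
      have : Continuous (fun q : ℝ => (∑ i ∈ Finset.range m, q ^ i)) := by
        continuity
      have := this.tendsto 1
      simpa using this
    have h3 : Tendsto (fun q : ℝ => (∑ i ∈ Finset.range m, q ^ i)⁻¹) (nhds 1) (nhds (m:ℝ)⁻¹) :=
      h2.inv₀ (by exact_mod_cast hm.ne')
    exact h1.mul (h3.pow k)
  refine Tendsto.congr' ?_ (hcont.mono_left nhdsWithin_le_nhds)
  exact Filter.eventuallyEq_of_mem self_mem_nhdsWithin (fun q hq => (heq q hq).symm)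

lemma aux_master (l : ℕ) (hl : 0 < l) (s : Fin l → ℕ) (hs₁ : 2 ≤ s ⟨0,hl⟩) (hs : ∀ j, 1 ≤ s j)
    (Q : Fin l → Polynomial ℝ) (hQ₁ : (Q ⟨0,hl⟩).coeff 0 = 0) :
    ∃ Cg : ℝ, 0 ≤ Cg ∧ ∀ q ∈ Set.Ioo (0:ℝ) 1, ∀ n : Fin l → ℕ, StrictAnti n → (∀ i, 0 < n i) →
      |∏ j, (Q j).eval (q ^ n j) * ((1 - q) / (1 - q ^ n j)) ^ s j|
        ≤ Cg * ∏ j, ((n j : ℝ) ^ s j)⁻¹ := by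
  classical
  set j0 : Fin l := ⟨0, hl⟩ with hj0
  set P : Fin l → Polynomial ℝ := fun j => if j = j0 then (Q j0).divX else Q j with hP
  choose B hB0 hB using fun j => aux_poly_bound (P j)
  set S : ℕ := ∑ j, s j with hS
  have hSpos : 0 < S := by
    calc 0 < s j0 := lt_of_lt_of_le two_pos hs₁
      _ ≤ S := Finset.single_le_sum (fun j _ => Nat.zero_le _) (Finset.mem_univ j0)
  refine ⟨(∏ j, B j) * ((S:ℝ) ^ S * Real.exp 1),
    mul_nonneg (Finset.prod_nonneg fun j _ => hB0 j) (by positivity), ?_⟩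
  rintro q ⟨hq0, hq1⟩ n hsa hpos
  set u : ℝ := -Real.log q with hu
  have hupos : 0 < u := by
    simp only [hu, neg_pos]; exact Real.log_neg hq0 hq1
  set N : ℕ := n j0 with hN
  have hNmax : ∀ j, n j ≤ N := fun j =>
    hsa.antitone (show j0 ≤ j from Fin.mk_le_of_le_val (Nat.zero_le _))
  have hNpos : 0 < N := hpos j0
  -- eval bound
  have heval : ∀ j, |(Q j).eval (q ^ n j)| ≤ B j * (if j = j0 then q ^ N else 1) := by
    intro j
    have hmem : q ^ n j ∈ Set.Icc (0:ℝ) 1 :=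
      ⟨by positivity, le_of_lt (pow_lt_one₀ hq0.le hq1 (hpos j).ne')⟩
    by_cases h : j = j0
    · have hXQ : Polynomial.X * (Q j0).divX = Q j0 := by
        have := Polynomial.X_mul_divX_add (Q j0)
        rwa [hQ₁, Polynomial.C_0, add_zero] at this
      subst h
      rw [if_pos rfl, ← hXQ, Polynomial.eval_mul, Polynomial.eval_X, abs_mul,
        abs_of_nonneg (by positivity : (0:ℝ) ≤ q ^ n j0), mul_comm (B j0), hN]
      exact mul_le_mul_of_nonneg_left (by simpa [hP] using hB j0 _ hmem) (by positivity)
    · rw [if_neg h, mul_one]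
      have := hB j _ hmem
      simpa [hP, if_neg h] using this
  -- ratio bound
  have hratio : ∀ j, 0 ≤ (1 - q) / (1 - q ^ n j) ∧
      ((1 - q) / (1 - q ^ n j)) ^ s j
        ≤ (1 + (N:ℝ) * u) ^ s j * (((n j : ℝ)) ^ s j)⁻¹ := by
    intro j
    obtain ⟨hb1, hb2⟩ := aux_ratio_bound hq0 hq1 (n j) (hpos j)
    have hnn : (0:ℝ) ≤ (1 - q) / (1 - q ^ n j) := by
      apply div_nonneg (by linarith) hb1.le
    have hnj : (0:ℝ) < (n j : ℝ) := by exact_mod_cast hpos j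
    refine ⟨hnn, ?_⟩
    have hle : (1 - q) / (1 - q ^ n j) ≤ (1 + (N:ℝ) * u) / (n j : ℝ) := by
      refine hb2.trans ?_
      gcongr
      exact_mod_cast hNmax j
    calc ((1 - q) / (1 - q ^ n j)) ^ s j ≤ ((1 + (N:ℝ) * u) / (n j : ℝ)) ^ s j :=
          pow_le_pow_left₀ hnn hle _
      _ = (1 + (N:ℝ) * u) ^ s j * (((n j : ℝ)) ^ s j)⁻¹ := by
          rw [div_pow, div_eq_mul_inv]
  have hfac : ∀ j ∈ Finset.univ, |(Q j).eval (q ^ n j) * ((1 - q) / (1 - q ^ n j)) ^ s j|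
      ≤ (B j * (if j = j0 then q ^ N else 1)) * ((1 + (N:ℝ) * u) ^ s j * (((n j:ℝ)) ^ s j)⁻¹) := by
    intro j _
    obtain ⟨hnn, hpow⟩ := hratio j
    rw [abs_mul, abs_of_nonneg (pow_nonneg hnn _)]
    apply mul_le_mul (heval j) hpow (pow_nonneg hnn _)
    exact mul_nonneg (hB0 j) (by by_cases h : j = j0 <;> simp [h] <;> positivity)
  have hqN : q ^ N = Real.exp (-((N:ℝ) * u)) := by
    have h : -((N:ℝ) * u) = N * Real.log q := by rw [hu]; ring
    rw [h, Real.exp_nat_mul, Real.exp_log hq0]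
  have hkey : q ^ N * (1 + (N:ℝ) * u) ^ S ≤ (S:ℝ) ^ S * Real.exp 1 := by
    have hexp := aux_exp_bound S hSpos ((N:ℝ) * u) (by positivity)
    calc q ^ N * (1 + (N:ℝ) * u) ^ S
        ≤ Real.exp (-((N:ℝ) * u)) * ((S:ℝ) ^ S * Real.exp 1 * Real.exp ((N:ℝ) * u)) := by
          rw [hqN]
          exact mul_le_mul_of_nonneg_left hexp (Real.exp_nonneg _)
      _ = (S:ℝ) ^ S * Real.exp 1 := by
          rw [Real.exp_neg]
          field_simp
  have hinvnn : (0:ℝ) ≤ ∏ j, ((n j : ℝ) ^ s j)⁻¹ :=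
    Finset.prod_nonneg fun j _ => by positivity
  calc |∏ j, (Q j).eval (q ^ n j) * ((1 - q) / (1 - q ^ n j)) ^ s j|
      = ∏ j, |(Q j).eval (q ^ n j) * ((1 - q) / (1 - q ^ n j)) ^ s j| := Finset.abs_prod _ _
    _ ≤ ∏ j, (B j * (if j = j0 then q ^ N else 1))
          * ((1 + (N:ℝ) * u) ^ s j * (((n j:ℝ)) ^ s j)⁻¹) :=
        Finset.prod_le_prod (fun j _ => abs_nonneg _) hfac
    _ = (∏ j, B j) * (q ^ N * (1 + (N:ℝ) * u) ^ S) * ∏ j, ((n j:ℝ) ^ s j)⁻¹ := by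
        rw [Finset.prod_mul_distrib, Finset.prod_mul_distrib, Finset.prod_mul_distrib,
          Finset.prod_ite_eq' Finset.univ j0 (fun _ => q ^ N), if_pos (Finset.mem_univ _),
          Finset.prod_pow_eq_pow_sum]
        ring
    _ ≤ (∏ j, B j) * ((S:ℝ) ^ S * Real.exp 1) * ∏ j, ((n j:ℝ) ^ s j)⁻¹ := by
        apply mul_le_mul_of_nonneg_right ?_ hinvnn
        exact mul_le_mul_of_nonneg_left hkey (Finset.prod_nonneg fun j _ => hB0 j)

/-- Let l ≥ 1, s_1 ≥ 2, s_2,…,s_l ≥ 1 and Q_1 ∈ tℝ[t], Q_2,…,Q_l ∈ ℝ[t].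
For 0 < q < 1 the series
F(q) = Σ_{n_1>⋯>n_l>0} Q_1(q^{n_1})⋯Q_l(q^{n_l}) / ((1−q^{n_1})^{s_1}⋯(1−q^{n_l})^{s_l})
converges, and (1−q)^{s_1+⋯+s_l}·F(q) → Q_1(1)⋯Q_l(1)·ζ(s_1,…,s_l) as q → 1⁻,
where ζ(s_1,…,s_l) = Σ_{n_1>⋯>n_l>0} 1/(n_1^{s_1}⋯n_l^{s_l}). -/
theorem zetaQ_tendsto_mzv (l : ℕ) (hl : 0 < l) (s : Fin l → ℕ)
    (hs₁ : 2 ≤ s ⟨0, hl⟩) (hs : ∀ j, 1 ≤ s j)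
    (Q : Fin l → Polynomial ℝ) (hQ₁ : (Q ⟨0, hl⟩).coeff 0 = 0) :
    (∀ q ∈ Set.Ioo (0 : ℝ) 1,
      Summable fun n : {n : Fin l → ℕ // StrictAnti n ∧ ∀ i, 0 < n i} =>
        ∏ j, (Q j).eval (q ^ n.1 j) / (1 - q ^ n.1 j) ^ s j) ∧
    Tendsto
      (fun q : ℝ => (1 - q) ^ (∑ j, s j) *
        ∑' n : {n : Fin l → ℕ // StrictAnti n ∧ ∀ i, 0 < n i},
          ∏ j, (Q j).eval (q ^ n.1 j) / (1 - q ^ n.1 j) ^ s j)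
      (nhdsWithin 1 (Set.Ioo (0 : ℝ) 1))
      (nhds ((∏ j, (Q j).eval 1) *
        ∑' n : {n : Fin l → ℕ // StrictAnti n ∧ ∀ i, 0 < n i},
          ∏ j, 1 / (n.1 j : ℝ) ^ s j)) := by
  classical
  obtain ⟨Cg, hCg0, hCg⟩ := aux_master l hl s hs₁ hs Q hQ₁
  have hgsum : Summable (fun n : {n : Fin l → ℕ // StrictAnti n ∧ ∀ i, 0 < n i} =>
      Cg * ∏ j, ((n.1 j : ℝ) ^ s j)⁻¹) := (aux_mzv_summable l hl s hs₁ hs).mul_left Cg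
  have hW : ∀ q : ℝ, ∀ n : Fin l → ℕ,
      (∏ j, (Q j).eval (q ^ n j) * ((1 - q) / (1 - q ^ n j)) ^ s j)
        = (1 - q) ^ (∑ j, s j) * ∏ j, (Q j).eval (q ^ n j) / (1 - q ^ n j) ^ s j := by
    intro q n
    rw [← Finset.prod_pow_eq_pow_sum, ← Finset.prod_mul_distrib]
    refine Finset.prod_congr rfl fun j _ => ?_
    rw [div_pow]
    ring
  have hsummW : ∀ q ∈ Set.Ioo (0:ℝ) 1,
      Summable (fun n : {n : Fin l → ℕ // StrictAnti n ∧ ∀ i, 0 < n i} =>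
        ∏ j, (Q j).eval (q ^ n.1 j) * ((1 - q) / (1 - q ^ n.1 j)) ^ s j) := by
    intro q hq
    apply Summable.of_norm_bounded hgsum
    intro n
    rw [Real.norm_eq_abs]
    exact hCg q hq n.1 n.2.1 n.2.2
  have hne : ∀ q ∈ Set.Ioo (0:ℝ) 1, ((1 - q) ^ (∑ j, s j) : ℝ) ≠ 0 := by
    intro q hq
    exact pow_ne_zero _ (by linarith [hq.2] : (1:ℝ) - q ≠ 0)
  have hsumm : ∀ q ∈ Set.Ioo (0:ℝ) 1,
      Summable (fun n : {n : Fin l → ℕ // StrictAnti n ∧ ∀ i, 0 < n i} =>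
        ∏ j, (Q j).eval (q ^ n.1 j) / (1 - q ^ n.1 j) ^ s j) := by
    intro q hq
    have h1 := (hsummW q hq).mul_left (((1 - q) ^ (∑ j, s j))⁻¹)
    refine h1.congr fun n => ?_
    rw [hW q n.1, ← mul_assoc, inv_mul_cancel₀ (hne q hq), one_mul]
  refine ⟨hsumm, ?_⟩
  have hfun : (fun q : ℝ => (1 - q) ^ (∑ j, s j) *
      ∑' n : {n : Fin l → ℕ // StrictAnti n ∧ ∀ i, 0 < n i},
        ∏ j, (Q j).eval (q ^ n.1 j) / (1 - q ^ n.1 j) ^ s j)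
      = fun q : ℝ => ∑' n : {n : Fin l → ℕ // StrictAnti n ∧ ∀ i, 0 < n i},
          ∏ j, (Q j).eval (q ^ n.1 j) * ((1 - q) / (1 - q ^ n.1 j)) ^ s j := by
    funext q
    rw [← tsum_mul_left]
    exact tsum_congr fun n => (hW q n.1).symm
  rw [hfun]
  have htgt : (∏ j, (Q j).eval 1) *
      (∑' n : {n : Fin l → ℕ // StrictAnti n ∧ ∀ i, 0 < n i}, ∏ j, 1 / (n.1 j : ℝ) ^ s j)
      = ∑' n : {n : Fin l → ℕ // StrictAnti n ∧ ∀ i, 0 < n i},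
          ∏ j, (Q j).eval 1 * (((n.1 j : ℝ))⁻¹) ^ s j := by
    rw [← tsum_mul_left]
    refine tsum_congr fun n => ?_
    rw [← Finset.prod_mul_distrib]
    exact Finset.prod_congr rfl fun j _ => by rw [inv_pow, one_div]
  rw [htgt]
  apply tendsto_tsum_of_dominated_convergence hgsum
  · intro n
    exact tendsto_finset_prod Finset.univ fun j _ =>
      aux_tendsto_term (n.1 j) (Q j) (s j) (n.2.2 j)
  · filter_upwards [self_mem_nhdsWithin] with q hq
    intro n
    rw [Real.norm_eq_abs]
    exact hCg q hq n.1 n.2.1 n.2.2
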